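/- arXiv:0804.1733 — 3 statements merged into one kernel-verified Lean document; each statement's English description precedes it below -/
import Mathlib

section
/- Let X be a Banach A-bimodule with ann X = {0}. If X̃ is a Banach A-bimodule and j : X → X̃ is a bounded injective A-bimodule homomorphism such that A·X̃ + X̃·A ⊆ j(X), then there exists a bounded A-bimodule homomorphism j̃ : X̃ → Δ(X) with ι_X = j̃ ∘ j; explicitly, for x̃ ∈ X̃, j̃(x̃) = (S, T) where S = j⁻¹ ∘ (a ↦ x̃·a) and T = j⁻¹ ∘ (a ↦ a·x̃) are bounded linear maps forming a double centralizer. -/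
noncomputable section

/-- A Banach `A`-bimodule structure on a Banach space `X`: bounded bilinear left and right
actions (encoded as continuous linear maps `l`, `r`, where `l a x = a·x` and `r a x = x·a`)
satisfying `(ab)·x = a·(b·x)`, `x·(ab) = (x·a)·b` and `(a·x)·b = a·(x·b)`. -/
structure BanachBimodule (A X : Type*) [NonUnitalNormedRing A] [NormedSpace ℂ A]
    [NormedAddCommGroup X] [NormedSpace ℂ X] where
  l : A →L[ℂ] X →L[ℂ] X
  r : A →L[ℂ] X →L[ℂ] X
  l_mul : ∀ a b x, l (a * b) x = l a (l b x)
  r_mul : ∀ a b x, r (a * b) x = r b (r a x)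
  l_r : ∀ a b x, r b (l a x) = l a (r b x)

variable {A X : Type*} [NonUnitalNormedRing A] [NormedSpace ℂ A]
  [IsScalarTower ℂ A A] [SMulCommClass ℂ A A] [CompleteSpace A]
  [NormedAddCommGroup X] [NormedSpace ℂ X] [CompleteSpace X]

/-- `(S, T)` is a double centralizer from `A` into `X`:
`S(αa) = S(α)·a`, `T(aα) = a·T(α)` and `a·S(α) = T(a)·α`. -/
def IsDoubleCentralizer (M : BanachBimodule A X) (S T : A →L[ℂ] X) : Prop :=
  (∀ α a : A, S (α * a) = M.r a (S α)) ∧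
  (∀ a α : A, T (a * α) = M.l a (T α)) ∧
  (∀ a α : A, M.l a (S α) = M.r α (T a))

/-- The canonical bounded linear map `ι_X : x ↦ (L_x, R_x)` where `L_x a = x·a`,
`R_x a = a·x`. -/
def iotaDC (M : BanachBimodule A X) : X →L[ℂ] (A →L[ℂ] X) × (A →L[ℂ] X) :=
  M.r.flip.prod M.l.flip

/-- The left action `a·(S, T) = (α ↦ a·S(α), α ↦ T(αa))` on pairs. -/
def dcSmulLeft (M : BanachBimodule A X) (a : A) (p : (A →L[ℂ] X) × (A →L[ℂ] X)) :
    (A →L[ℂ] X) × (A →L[ℂ] X) :=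
  ((M.l a).comp p.1, p.2.comp ((ContinuousLinearMap.mul ℂ A).flip a))

/-- The right action `(S, T)·a = (α ↦ S(aα), α ↦ T(α)·a)` on pairs. -/
def dcSmulRight (M : BanachBimodule A X) (p : (A →L[ℂ] X) × (A →L[ℂ] X)) (a : A) :
    (A →L[ℂ] X) × (A →L[ℂ] X) :=
  (p.1.comp (ContinuousLinearMap.mul ℂ A a), (M.r a).comp p.2)

/-- Universal property (existence): if `ann X = {0}`, `j : X → X̃` is a bounded injective
`A`-bimodule homomorphism and `A·X̃ + X̃·A ⊆ j(X)`, then there is a bounded `A`-bimodule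
homomorphism `j̃ : X̃ → Δ(X)` with `ι_X = j̃ ∘ j`; explicitly `j(j̃(x̃).1 a) = x̃·a` and
`j(j̃(x̃).2 a) = a·x̃`. -/
theorem statement9 (M : BanachBimodule A X)
    (hann : ∀ x : X, (∀ a : A, M.l a x = 0 ∧ M.r a x = 0) → x = 0)
    {Y : Type*} [NormedAddCommGroup Y] [NormedSpace ℂ Y] [CompleteSpace Y]
    (N : BanachBimodule A Y) (j : X →L[ℂ] Y)
    (hinj : Function.Injective j)
    (hjl : ∀ (a : A) (x : X), j (M.l a x) = N.l a (j x))
    (hjr : ∀ (a : A) (x : X), j (M.r a x) = N.r a (j x))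
    (hrange : ∀ (a : A) (y : Y), N.l a y ∈ Set.range j ∧ N.r a y ∈ Set.range j) :
    ∃ jt : Y →L[ℂ] (A →L[ℂ] X) × (A →L[ℂ] X),
      (∀ y : Y, IsDoubleCentralizer M (jt y).1 (jt y).2) ∧
      (∀ (y : Y) (a : A), j ((jt y).1 a) = N.r a y ∧ j ((jt y).2 a) = N.l a y) ∧
      (∀ (a : A) (y : Y), jt (N.l a y) = dcSmulLeft M a (jt y) ∧
        jt (N.r a y) = dcSmulRight M (jt y) a) ∧
      (∀ x : X, jt (j x) = iotaDC M x) := by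
  classical
  choose S hS using fun (a : A) (y : Y) => (hrange a y).2
  choose T hT using fun (a : A) (y : Y) => (hrange a y).1
  -- S a y = j⁻¹ (N.r a y),  T a y = j⁻¹ (N.l a y)
  have Slin : ∀ y : Y, ∃ f : A →ₗ[ℂ] X, ∀ a, f a = S a y := by
    intro y
    refine ⟨{ toFun := fun a => S a y, map_add' := ?_, map_smul' := ?_ }, fun a => rfl⟩
    · intro a b
      apply hinj
      show j (S (a + b) y) = j (S a y + S b y)
      simp [hS, map_add]
    · intro c a
      apply hinj
      show j (S (c • a) y) = j ((RingHom.id ℂ) c • S a y)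
      simp [hS, map_smul]
  have Tlin : ∀ y : Y, ∃ f : A →ₗ[ℂ] X, ∀ a, f a = T a y := by
    intro y
    refine ⟨{ toFun := fun a => T a y, map_add' := ?_, map_smul' := ?_ }, fun a => rfl⟩
    · intro a b
      apply hinj
      show j (T (a + b) y) = j (T a y + T b y)
      simp [hT, map_add]
    · intro c a
      apply hinj
      show j (T (c • a) y) = j ((RingHom.id ℂ) c • T a y)
      simp [hT, map_smul]
  choose Sl hSl using Slin
  choose Tl hTl using Tlin
  have hjS : ∀ (y : Y) (a : A), j (Sl y a) = N.r a y := by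
    intro y a; rw [hSl]; exact hS a y
  have hjT : ∀ (y : Y) (a : A), j (Tl y a) = N.l a y := by
    intro y a; rw [hTl]; exact hT a y
  have Scont : ∀ y : Y, Continuous (Sl y) := by
    intro y
    apply (Sl y).continuous_of_seq_closed_graph
    intro u a x hu hx
    apply hinj
    have h1 : Filter.Tendsto (fun n => j (Sl y (u n))) Filter.atTop (nhds (j x)) :=
      (j.continuous.tendsto _).comp hx
    have h2 : Filter.Tendsto (fun n => N.r.flip y (u n)) Filter.atTop
        (nhds (N.r.flip y a)) := ((N.r.flip y).continuous.tendsto _).comp hu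
    have heq : (fun n => j (Sl y (u n))) = fun n => N.r.flip y (u n) := by
      funext n; simpa using hjS y (u n)
    rw [heq] at h1
    rw [hjS y a]
    exact (tendsto_nhds_unique h1 h2).trans (by simp)
  have Tcont : ∀ y : Y, Continuous (Tl y) := by
    intro y
    apply (Tl y).continuous_of_seq_closed_graph
    intro u a x hu hx
    apply hinj
    have h1 : Filter.Tendsto (fun n => j (Tl y (u n))) Filter.atTop (nhds (j x)) :=
      (j.continuous.tendsto _).comp hx
    have h2 : Filter.Tendsto (fun n => N.l.flip y (u n)) Filter.atTop
        (nhds (N.l.flip y a)) := ((N.l.flip y).continuous.tendsto _).comp hu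
    have heq : (fun n => j (Tl y (u n))) = fun n => N.l.flip y (u n) := by
      funext n; simpa using hjT y (u n)
    rw [heq] at h1
    rw [hjT y a]
    exact (tendsto_nhds_unique h1 h2).trans (by simp)
  set SC : Y → (A →L[ℂ] X) := fun y => ⟨Sl y, Scont y⟩ with hSC
  set TC : Y → (A →L[ℂ] X) := fun y => ⟨Tl y, Tcont y⟩ with hTC
  have hjS' : ∀ (y : Y) (a : A), j (SC y a) = N.r a y := hjS
  have hjT' : ∀ (y : Y) (a : A), j (TC y a) = N.l a y := hjT
  let jl : Y →ₗ[ℂ] (A →L[ℂ] X) × (A →L[ℂ] X) :=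
    { toFun := fun y => (SC y, TC y)
      map_add' := by
        intro y z
        refine Prod.ext (ContinuousLinearMap.ext fun a => hinj ?_)
          (ContinuousLinearMap.ext fun a => hinj ?_)
        · show j (SC (y + z) a) = j (SC y a + SC z a)
          simp [hjS', map_add]
        · show j (TC (y + z) a) = j (TC y a + TC z a)
          simp [hjT', map_add]
      map_smul' := by
        intro c y
        refine Prod.ext (ContinuousLinearMap.ext fun a => hinj ?_)
          (ContinuousLinearMap.ext fun a => hinj ?_)
        · show j (SC (c • y) a) = j (c • SC y a)
          simp [hjS', map_smul]
        · show j (TC (c • y) a) = j (c • TC y a)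
          simp [hjT', map_smul] }
  have hjl1 : ∀ y : Y, (jl y).1 = SC y := fun y => rfl
  have hjl2 : ∀ y : Y, (jl y).2 = TC y := fun y => rfl
  have jlc : Continuous jl := by
    apply jl.continuous_of_seq_closed_graph
    intro u y p hu hp
    refine Prod.ext (ContinuousLinearMap.ext fun a => hinj ?_)
      (ContinuousLinearMap.ext fun a => hinj ?_)
    · have hev1 : Filter.Tendsto (fun n => j ((jl (u n)).1 a)) Filter.atTop
          (nhds (j (p.1 a))) :=
        (j.continuous.tendsto _).comp
          (((ContinuousLinearMap.apply ℂ X a).continuous.tendsto _).comp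
            ((continuous_fst.tendsto _).comp hp))
      have h2 : Filter.Tendsto (fun n => N.r a (u n)) Filter.atTop (nhds (N.r a y)) :=
        ((N.r a).continuous.tendsto _).comp hu
      have heq : (fun n => j ((jl (u n)).1 a)) = fun n => N.r a (u n) := by
        funext n; exact hjS' (u n) a
      rw [heq] at hev1
      show j (p.1 a) = j (SC y a)
      rw [hjS' y a]
      exact tendsto_nhds_unique hev1 h2
    · have hev2 : Filter.Tendsto (fun n => j ((jl (u n)).2 a)) Filter.atTop
          (nhds (j (p.2 a))) :=
        (j.continuous.tendsto _).comp
          (((ContinuousLinearMap.apply ℂ X a).continuous.tendsto _).comp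
            ((continuous_snd.tendsto _).comp hp))
      have h2 : Filter.Tendsto (fun n => N.l a (u n)) Filter.atTop (nhds (N.l a y)) :=
        ((N.l a).continuous.tendsto _).comp hu
      have heq : (fun n => j ((jl (u n)).2 a)) = fun n => N.l a (u n) := by
        funext n; exact hjT' (u n) a
      rw [heq] at hev2
      show j (p.2 a) = j (TC y a)
      rw [hjT' y a]
      exact tendsto_nhds_unique hev2 h2
  refine ⟨⟨jl, jlc⟩, ?_, ?_, ?_, ?_⟩
  · intro y
    refine ⟨fun α a => hinj ?_, fun a α => hinj ?_, fun a α => hinj ?_⟩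
    · show j (SC y (α * a)) = j (M.r a (SC y α))
      rw [hjr, hjS' y, hjS' y, N.r_mul]
    · show j (TC y (a * α)) = j (M.l a (TC y α))
      rw [hjl, hjT' y, hjT' y, N.l_mul]
    · show j (M.l a (SC y α)) = j (M.r α (TC y a))
      rw [hjl, hjr, hjS' y, hjT' y, N.l_r]
  · intro y a
    exact ⟨hjS' y a, hjT' y a⟩
  · intro a y
    constructor
    · refine Prod.ext (ContinuousLinearMap.ext fun α => hinj ?_)
        (ContinuousLinearMap.ext fun α => hinj ?_)
      · show j (SC (N.l a y) α) = j (M.l a (SC y α))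
        rw [hjS', hjl, hjS', N.l_r]
      · show j (TC (N.l a y) α) = j (TC y (α * a))
        rw [hjT', hjT', N.l_mul]
    · refine Prod.ext (ContinuousLinearMap.ext fun α => hinj ?_)
        (ContinuousLinearMap.ext fun α => hinj ?_)
      · show j (SC (N.r a y) α) = j (SC y (a * α))
        rw [hjS', hjS', N.r_mul]
      · show j (TC (N.r a y) α) = j (M.r a (TC y α))
        rw [hjT', hjr, hjT', N.l_r]
  · intro x
    refine Prod.ext (ContinuousLinearMap.ext fun a => hinj ?_)
      (ContinuousLinearMap.ext fun a => hinj ?_)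
    · show j (SC (j x) a) = j (M.r a x)
      rw [hjS', hjr]
    · show j (TC (j x) a) = j (M.l a x)
      rw [hjT', hjl]
end
end

section
/- Let X be a Banach A-bimodule with ann X = {0}, let X̃ be a Banach A-bimodule and j : X → X̃ a bounded injective A-bimodule homomorphism with A·X̃ + X̃·A ⊆ j(X). If j̃₁, j̃₂ : X̃ → Δ(X) are bounded A-bimodule homomorphisms with j̃₁ ∘ j = ι_X = j̃₂ ∘ j, then j̃₁ = j̃₂. (Uniqueness of the universal map in the universal property of (ι_X, Δ(X)).) -/
noncomputable section

variable {A X : Type*} [NonUnitalNormedRing A] [NormedSpace ℂ A]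
  [IsScalarTower ℂ A A] [SMulCommClass ℂ A A] [CompleteSpace A]
  [NormedAddCommGroup X] [NormedSpace ℂ X] [CompleteSpace X]

/-- Universal property (uniqueness): if `ann X = {0}`, `j : X → X̃` is a bounded injective
`A`-bimodule homomorphism with `A·X̃ + X̃·A ⊆ j(X)`, and `j̃₁, j̃₂ : X̃ → Δ(X)` are bounded
`A`-bimodule homomorphisms with `j̃₁ ∘ j = ι_X = j̃₂ ∘ j`, then `j̃₁ = j̃₂`. -/
theorem statement10 (M : BanachBimodule A X)
    (hann : ∀ x : X, (∀ a : A, M.l a x = 0 ∧ M.r a x = 0) → x = 0)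
    {Y : Type*} [NormedAddCommGroup Y] [NormedSpace ℂ Y] [CompleteSpace Y]
    (N : BanachBimodule A Y) (j : X →L[ℂ] Y)
    (hinj : Function.Injective j)
    (hjl : ∀ (a : A) (x : X), j (M.l a x) = N.l a (j x))
    (hjr : ∀ (a : A) (x : X), j (M.r a x) = N.r a (j x))
    (hrange : ∀ (a : A) (y : Y), N.l a y ∈ Set.range j ∧ N.r a y ∈ Set.range j)
    (jt₁ jt₂ : Y →L[ℂ] (A →L[ℂ] X) × (A →L[ℂ] X))
    (hdc₁ : ∀ y : Y, IsDoubleCentralizer M (jt₁ y).1 (jt₁ y).2)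
    (hdc₂ : ∀ y : Y, IsDoubleCentralizer M (jt₂ y).1 (jt₂ y).2)
    (hhom₁ : ∀ (a : A) (y : Y), jt₁ (N.l a y) = dcSmulLeft M a (jt₁ y) ∧
      jt₁ (N.r a y) = dcSmulRight M (jt₁ y) a)
    (hhom₂ : ∀ (a : A) (y : Y), jt₂ (N.l a y) = dcSmulLeft M a (jt₂ y) ∧
      jt₂ (N.r a y) = dcSmulRight M (jt₂ y) a)
    (hcomm₁ : ∀ x : X, jt₁ (j x) = iotaDC M x)
    (hcomm₂ : ∀ x : X, jt₂ (j x) = iotaDC M x) :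
    jt₁ = jt₂ := by
  have key : ∀ (a : A) (y : Y), jt₁ (N.l a y) = jt₂ (N.l a y) ∧ jt₁ (N.r a y) = jt₂ (N.r a y) := by
    intro a y
    obtain ⟨⟨x₁, h₁⟩, x₂, h₂⟩ := hrange a y
    constructor
    · rw [← h₁, hcomm₁, hcomm₂]
    · rw [← h₂, hcomm₁, hcomm₂]
  ext y : 1
  obtain ⟨hS₁, hT₁, hST₁⟩ := hdc₁ y
  obtain ⟨hS₂, hT₂, hST₂⟩ := hdc₂ y
  have hL : ∀ a, dcSmulLeft M a (jt₁ y) = dcSmulLeft M a (jt₂ y) := fun a => by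
    rw [← (hhom₁ a y).1, ← (hhom₂ a y).1]; exact (key a y).1
  have hR : ∀ a, dcSmulRight M (jt₁ y) a = dcSmulRight M (jt₂ y) a := fun a => by
    rw [← (hhom₁ a y).2, ← (hhom₂ a y).2]; exact (key a y).2
  have hSprod : ∀ a α : A, (jt₁ y).1 (a * α) = (jt₂ y).1 (a * α) := by
    intro a α
    have := congrArg (fun p : (A →L[ℂ] X) × (A →L[ℂ] X) => p.1 α) (hR a)
    simpa [dcSmulRight] using this
  have hTprod : ∀ a α : A, (jt₁ y).2 (α * a) = (jt₂ y).2 (α * a) := by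
    intro a α
    have := congrArg (fun p : (A →L[ℂ] X) × (A →L[ℂ] X) => p.2 α) (hL a)
    simpa [dcSmulLeft] using this
  have hLS : ∀ a α : A, M.l a ((jt₁ y).1 α) = M.l a ((jt₂ y).1 α) := by
    intro a α
    have := congrArg (fun p : (A →L[ℂ] X) × (A →L[ℂ] X) => p.1 α) (hL a)
    simpa [dcSmulLeft] using this
  have hRT : ∀ a α : A, M.r a ((jt₁ y).2 α) = M.r a ((jt₂ y).2 α) := by
    intro a α
    have := congrArg (fun p : (A →L[ℂ] X) × (A →L[ℂ] X) => p.2 α) (hR a)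
    simpa [dcSmulRight] using this
  refine Prod.ext ?_ ?_
  · ext α
    have hz : (jt₁ y).1 α - (jt₂ y).1 α = 0 := by
      apply hann
      intro a
      constructor
      · rw [map_sub, hLS a α, sub_self]
      · rw [map_sub, ← hS₁, ← hS₂, hSprod α a, sub_self]
    exact sub_eq_zero.mp hz
  · ext α
    have hz : (jt₁ y).2 α - (jt₂ y).2 α = 0 := by
      apply hann
      intro a
      constructor
      · rw [map_sub, ← hT₁, ← hT₂, hTprod α a, sub_self]
      · rw [map_sub, hRT a α, sub_self]
    exact sub_eq_zero.mp hz
end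
end

section
/- Let A be a Banach algebra with a bounded approximate identity and let X be a neounital Banach A-bimodule, i.e. every x ∈ X can be written as x = a·y·c with a, c ∈ A and y ∈ X. Then the canonical map ι_{X*} : X* → Δ(X*) into the double centralizers from A into the dual bimodule X* is a topological isomorphism of Banach A-bimodules. -/
noncomputable section

variable {A X : Type*} [NonUnitalNormedRing A] [NormedSpace ℂ A]
  [IsScalarTower ℂ A A] [SMulCommClass ℂ A A] [CompleteSpace A]
  [NormedAddCommGroup X] [NormedSpace ℂ X] [CompleteSpace X]

/-- The dual Banach `A`-bimodule `X*` of `X`, with actions `(a·φ)(x) = φ(x·a)` and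
`(φ·a)(x) = φ(a·x)`. -/
def BanachBimodule.dual (M : BanachBimodule A X) : BanachBimodule A (X →L[ℂ] ℂ) where
  l := (ContinuousLinearMap.compL ℂ X X ℂ).flip.comp M.r
  r := (ContinuousLinearMap.compL ℂ X X ℂ).flip.comp M.l
  l_mul := by
    intro a b φ
    ext x
    simp [M.r_mul]
  r_mul := by
    intro a b φ
    ext x
    simp [M.l_mul]
  l_r := by
    intro a b φ
    ext x
    simp [M.l_r]

/-- A bounded approximate identity for `A`. -/
def HasBAI (A : Type*) [NonUnitalNormedRing A] [NormedSpace ℂ A] : Prop :=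
  ∃ (ι : Type) (p : Filter ι) (e : ι → A), p.NeBot ∧ (∃ C : ℝ, ∀ i, ‖e i‖ ≤ C) ∧
    ∀ a : A, Filter.Tendsto (fun i => e i * a) p (nhds a) ∧
      Filter.Tendsto (fun i => a * e i) p (nhds a)

lemma dual_l_apply (M : BanachBimodule A X) (a : A) (φ : X →L[ℂ] ℂ) (x : X) :
    M.dual.l a φ x = φ (M.r a x) := rfl

lemma dual_r_apply (M : BanachBimodule A X) (a : A) (φ : X →L[ℂ] ℂ) (x : X) :
    M.dual.r a φ x = φ (M.l a x) := rfl

lemma iotaDC_fst (M : BanachBimodule A X) (x : X) (a : A) :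
    (iotaDC M x).1 a = M.r a x := rfl

lemma iotaDC_snd (M : BanachBimodule A X) (x : X) (a : A) :
    (iotaDC M x).2 a = M.l a x := rfl

/-- If `A` has a bounded approximate identity and `X` is neounital (every `x` is of the form
`a·y·c`), then `ι_{X*} : X* → Δ(X*)` is a topological isomorphism of Banach `A`-bimodules:
it is an injective bimodule homomorphism, bounded below, and onto `Δ(X*)`. -/
theorem statement12 (M : BanachBimodule A X) (hBAI : HasBAI A)
    (hneo : ∀ x : X, ∃ (a c : A) (y : X), x = M.l a (M.r c y)) :
    Function.Injective (iotaDC M.dual) ∧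
    (∀ S T : A →L[ℂ] (X →L[ℂ] ℂ), IsDoubleCentralizer M.dual S T →
      ∃ φ : X →L[ℂ] ℂ, iotaDC M.dual φ = (S, T)) ∧
    (∃ c > 0, ∀ φ : X →L[ℂ] ℂ, c * ‖φ‖ ≤ ‖iotaDC M.dual φ‖) ∧
    (∀ (a : A) (φ : X →L[ℂ] ℂ),
      iotaDC M.dual (M.dual.l a φ) = dcSmulLeft M.dual a (iotaDC M.dual φ) ∧
      iotaDC M.dual (M.dual.r a φ) = dcSmulRight M.dual (iotaDC M.dual φ) a) := by
  classical
  obtain ⟨ι, p, e, hp, ⟨C, hC⟩, he⟩ := hBAI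
  haveI := hp
  set C' : ℝ := max C 1 with hC'def
  have hC'pos : (0:ℝ) < C' := lt_of_lt_of_le one_pos (le_max_right _ _)
  have hC'bound : ∀ i, ‖e i‖ ≤ C' := fun i => (hC i).trans (le_max_left _ _)
  -- left approximate identity acts on X
  have hLx : ∀ x : X, Filter.Tendsto (fun i => M.l (e i) x) p (nhds x) := by
    intro x
    obtain ⟨a, c, y, rfl⟩ := hneo x
    have h2 : Filter.Tendsto (fun b : A => M.l b (M.r c y)) (nhds a)
        (nhds (M.l a (M.r c y))) := (M.l.flip (M.r c y)).continuous.tendsto a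
    have h3 := h2.comp (he a).1
    simpa [Function.comp_def, M.l_mul] using h3
  have hRx : ∀ x : X, Filter.Tendsto (fun i => M.r (e i) x) p (nhds x) := by
    intro x
    obtain ⟨a, c, y, rfl⟩ := hneo x
    rw [show M.l a (M.r c y) = M.r c (M.l a y) from (M.l_r a c y).symm]
    have h2 : Filter.Tendsto (fun b : A => M.r b (M.l a y)) (nhds c)
        (nhds (M.r c (M.l a y))) := (M.r.flip (M.l a y)).continuous.tendsto c
    have h3 := h2.comp (he c).2
    simpa [Function.comp_def, M.r_mul] using h3
  -- injectivity
  have hinj : Function.Injective (iotaDC M.dual) := by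
    intro φ ψ h
    ext x
    have h1 : ∀ i, φ (M.l (e i) x) = ψ (M.l (e i) x) := by
      intro i
      have h2 : (iotaDC M.dual φ).1 (e i) x = (iotaDC M.dual ψ).1 (e i) x := by rw [h]
      simpa [iotaDC_fst, dual_r_apply] using h2
    have t1 : Filter.Tendsto (fun i => φ (M.l (e i) x)) p (nhds (φ x)) :=
      (φ.continuous.tendsto x).comp (hLx x)
    have t2 : Filter.Tendsto (fun i => φ (M.l (e i) x)) p (nhds (ψ x)) := by
      have t2' : Filter.Tendsto (fun i => ψ (M.l (e i) x)) p (nhds (ψ x)) :=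
        (ψ.continuous.tendsto x).comp (hLx x)
      simpa [h1] using t2'
    exact tendsto_nhds_unique t1 t2
  refine ⟨hinj, ?_, ?_, ?_⟩
  · -- surjectivity
    intro S T hDC
    obtain ⟨hS, hT, hST⟩ := hDC
    have hconv : ∀ x : X, ∃ L : ℂ, Filter.Tendsto (fun i => S (e i) x) p (nhds L) := by
      intro x
      obtain ⟨a, c, y, rfl⟩ := hneo x
      refine ⟨S a (M.r c y), ?_⟩
      have key : ∀ i, S (e i) (M.l a (M.r c y)) = S (e i * a) (M.r c y) := by
        intro i
        rw [hS (e i) a, dual_r_apply]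
      have hcont : Continuous fun b : A => S b (M.r c y) :=
        ((ContinuousLinearMap.apply ℂ ℂ (M.r c y)).comp S).continuous
      have h1 : Filter.Tendsto (fun i => S (e i * a) (M.r c y)) p
          (nhds (S a (M.r c y))) := (hcont.tendsto a).comp (he a).1
      simpa [key] using h1
    choose g hg using hconv
    have gadd : ∀ x y : X, g (x + y) = g x + g y := by
      intro x y
      refine tendsto_nhds_unique (hg (x + y)) ?_
      simpa [map_add] using (hg x).add (hg y)
    have gsmul : ∀ (c : ℂ) (x : X), g (c • x) = c * g x := by
      intro c x
      refine tendsto_nhds_unique (hg (c • x)) ?_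
      simpa [map_smul, smul_eq_mul] using (hg x).const_mul c
    have gbound : ∀ x : X, ‖g x‖ ≤ ‖S‖ * C' * ‖x‖ := by
      intro x
      refine le_of_tendsto ((continuous_norm.tendsto _).comp (hg x))
        (Filter.Eventually.of_forall fun i => ?_)
      calc ‖S (e i) x‖ ≤ ‖S (e i)‖ * ‖x‖ := (S (e i)).le_opNorm x
        _ ≤ ‖S‖ * ‖e i‖ * ‖x‖ := by gcongr; exact S.le_opNorm _
        _ ≤ ‖S‖ * C' * ‖x‖ := by gcongr ?_ * ?_ * ‖x‖ <;>
              first | exact le_rfl | exact hC'bound i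
    let φ : X →L[ℂ] ℂ := LinearMap.mkContinuous
      { toFun := g, map_add' := gadd, map_smul' := fun c x => by simpa using gsmul c x }
      (‖S‖ * C') gbound
    have hφ : ∀ x : X, Filter.Tendsto (fun i => S (e i) x) p (nhds (φ x)) := hg
    refine ⟨φ, Prod.ext ?_ ?_⟩
    · ext a x
      have key : ∀ i, S (e i) (M.l a x) = S (e i * a) x := by
        intro i; rw [hS (e i) a, dual_r_apply]
      have hcont : Continuous fun b : A => S b x :=
        ((ContinuousLinearMap.apply ℂ ℂ x).comp S).continuous
      have h1 : Filter.Tendsto (fun i => S (e i) (M.l a x)) p (nhds (S a x)) := by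
        simpa [key, Function.comp_def] using (hcont.tendsto a).comp (he a).1
      have h2 := tendsto_nhds_unique (hφ (M.l a x)) h1
      simpa [iotaDC_fst, dual_r_apply] using h2
    · ext a x
      have key : ∀ i, S (e i) (M.r a x) = T a (M.l (e i) x) := by
        intro i
        have := congrArg (fun ψ : X →L[ℂ] ℂ => ψ x) (hST a (e i))
        simpa [dual_l_apply, dual_r_apply] using this
      have h1 : Filter.Tendsto (fun i => S (e i) (M.r a x)) p (nhds (T a x)) := by
        simpa [key, Function.comp_def] using ((T a).continuous.tendsto x).comp (hLx x)
      have h2 := tendsto_nhds_unique (hφ (M.r a x)) h1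
      simpa [iotaDC_snd, dual_l_apply] using h2
  · -- bounded below
    refine ⟨C'⁻¹, inv_pos.mpr hC'pos, fun φ => ?_⟩
    have hb : ‖φ‖ ≤ C' * ‖iotaDC M.dual φ‖ := by
      refine φ.opNorm_le_bound (by positivity) fun x => ?_
      have t1 : Filter.Tendsto (fun i => ‖φ (M.l (e i) x)‖) p (nhds ‖φ x‖) :=
        (continuous_norm.tendsto _).comp ((φ.continuous.tendsto x).comp (hLx x))
      refine le_of_tendsto t1 (Filter.Eventually.of_forall fun i => ?_)
      have e1 : φ (M.l (e i) x) = (iotaDC M.dual φ).1 (e i) x := rfl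
      calc ‖φ (M.l (e i) x)‖ = ‖(iotaDC M.dual φ).1 (e i) x‖ := by rw [e1]
        _ ≤ ‖(iotaDC M.dual φ).1 (e i)‖ * ‖x‖ := ContinuousLinearMap.le_opNorm _ _
        _ ≤ ‖(iotaDC M.dual φ).1‖ * ‖e i‖ * ‖x‖ := by
            gcongr; exact ContinuousLinearMap.le_opNorm _ _
        _ ≤ ‖iotaDC M.dual φ‖ * C' * ‖x‖ := by
            gcongr
            · exact norm_fst_le _
            · exact hC'bound i
        _ = C' * ‖iotaDC M.dual φ‖ * ‖x‖ := by ring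
    calc C'⁻¹ * ‖φ‖ ≤ C'⁻¹ * (C' * ‖iotaDC M.dual φ‖) := by gcongr
      _ = ‖iotaDC M.dual φ‖ := by field_simp
  · -- bimodule homomorphism
    intro a φ
    constructor
    · refine Prod.ext ?_ ?_
      · ext α x
        show M.dual.l a φ (M.l α x) = M.dual.l a (M.dual.r α φ) x
        simp only [dual_l_apply, dual_r_apply, M.l_r]
      · ext α x
        show M.dual.l a φ (M.r α x) = M.dual.l (α * a) φ x
        simp only [dual_l_apply, M.r_mul]
    · refine Prod.ext ?_ ?_
      · ext α x
        show M.dual.r a φ (M.l α x) = M.dual.r (a * α) φ x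
        simp only [dual_r_apply, M.l_mul]
      · ext α x
        show M.dual.r a φ (M.r α x) = M.dual.r a (M.dual.l α φ) x
        simp only [dual_l_apply, dual_r_apply, M.l_r]
end
end
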